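/- For all real numbers u_pt, u_x, u_x2, u_x3, u_x4, the quartic polynomial P(x) = u_pt + u_x·L₁(x) + u_x2·L₂(x) + u_x3·L₃(x) + u_x4·L₄(x) has smoothness indicator β(P) = (u_x + u_x3/10)² + (13/3)·(u_x2 + (123/455)·u_x4)² + (781/20)·(u_x3)² + (1421461/2275)·(u_x4)². -/

import Mathlib

open Polynomial

/-- Legendre polynomial `L₁` shifted to `[−1/2, 1/2]`, as a real polynomial. -/
noncomputable def L1 : ℝ[X] := X

/-- Legendre polynomial `L₂` shifted to `[−1/2, 1/2]`, as a real polynomial. -/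
noncomputable def L2 : ℝ[X] := X ^ 2 - C (1 / 12)

/-- Legendre polynomial `L₃` shifted to `[−1/2, 1/2]`, as a real polynomial. -/
noncomputable def L3 : ℝ[X] := X ^ 3 - C (3 / 20) * X

/-- Legendre polynomial `L₄` shifted to `[−1/2, 1/2]`, as a real polynomial. -/
noncomputable def L4 : ℝ[X] := X ^ 4 - C (3 / 14) * X ^ 2 + C (3 / 560)

/-- The Jiang–Shu smoothness indicator of a real polynomial on the unit zone `[−1/2, 1/2]`:
`β(P) = Σ_{l=1}^{deg P} ∫_{−1/2}^{1/2} (P⁽ˡ⁾(x))² dx`. -/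
noncomputable def beta (P : ℝ[X]) : ℝ :=
  ∑ l ∈ Finset.Icc 1 P.natDegree,
    ∫ x in (-(1 : ℝ) / 2)..(1 / 2), ((derivative^[l] P).eval x) ^ 2

/-- Integral of an explicit polynomial of degree at most 8. -/
lemma int_poly8 (c0 c1 c2 c3 c4 c5 c6 c7 c8 a b : ℝ) :
    (∫ x in a..b, (c0 + c1*x + c2*x^2 + c3*x^3 + c4*x^4 + c5*x^5 + c6*x^6 + c7*x^7 + c8*x^8))
    = (c0*b + c1/2*b^2 + c2/3*b^3 + c3/4*b^4 + c4/5*b^5 + c5/6*b^6 + c6/7*b^7 + c7/8*b^8 + c8/9*b^9)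
      - (c0*a + c1/2*a^2 + c2/3*a^3 + c3/4*a^4 + c4/5*a^5 + c5/6*a^6 + c6/7*a^7 + c7/8*a^8 + c8/9*a^9) := by
  apply intervalIntegral.integral_eq_sub_of_hasDerivAt
  · intro x _
    have h : HasDerivAt (fun x : ℝ => c0*x + c1/2*x^2 + c2/3*x^3 + c3/4*x^4 + c4/5*x^5 + c5/6*x^6 + c6/7*x^7 + c7/8*x^8 + c8/9*x^9)
        (c0*1 + c1/2*(2*x^1) + c2/3*(3*x^2) + c3/4*(4*x^3) + c4/5*(5*x^4) + c5/6*(6*x^5) + c6/7*(7*x^6) + c7/8*(8*x^7) + c8/9*(9*x^8)) x :=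
      ((((((((((hasDerivAt_id x).const_mul c0).add
        ((hasDerivAt_pow 2 x).const_mul (c1/2))).add
        ((hasDerivAt_pow 3 x).const_mul (c2/3))).add
        ((hasDerivAt_pow 4 x).const_mul (c3/4))).add
        ((hasDerivAt_pow 5 x).const_mul (c4/5))).add
        ((hasDerivAt_pow 6 x).const_mul (c5/6))).add
        ((hasDerivAt_pow 7 x).const_mul (c6/7))).add
        ((hasDerivAt_pow 8 x).const_mul (c7/8))).add
        ((hasDerivAt_pow 9 x).const_mul (c8/9)))
    refine h.congr_deriv ?_
    ring
  · apply Continuous.intervalIntegrable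
    fun_prop

/-- The Jiang–Shu smoothness indicator of any quartic written in the shifted Legendre
basis is a sum of perfect squares. -/
theorem smoothness_indicator_r5 (upt ux ux2 ux3 ux4 : ℝ) :
    beta (C upt + C ux * L1 + C ux2 * L2 + C ux3 * L3 + C ux4 * L4) =
      (ux + ux3 / 10) ^ 2 + (13 / 3) * (ux2 + (123 / 455) * ux4) ^ 2
        + (781 / 20) * ux3 ^ 2 + (1421461 / 2275) * ux4 ^ 2 := by
  set P : ℝ[X] := C upt + C ux * L1 + C ux2 * L2 + C ux3 * L3 + C ux4 * L4 with hP
  have hdeg : P.natDegree ≤ 4 := by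
    rw [hP]; unfold L1 L2 L3 L4; compute_degree
  have hsum : beta P = ∑ l ∈ Finset.Icc 1 4,
      ∫ x in (-(1 : ℝ) / 2)..(1 / 2), ((derivative^[l] P).eval x) ^ 2 := by
    rw [beta]
    apply Finset.sum_subset (Finset.Icc_subset_Icc_right hdeg)
    intro l hl hnl
    have hlt : P.natDegree < l := by
      simp only [Finset.mem_Icc] at hl hnl
      omega
    rw [Polynomial.iterate_derivative_eq_zero hlt]
    simp
  rw [hsum]
  have hIcc : Finset.Icc 1 4 = ({1, 2, 3, 4} : Finset ℕ) := rfl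
  rw [hIcc]
  rw [Finset.sum_insert (by decide), Finset.sum_insert (by decide),
    Finset.sum_insert (by decide), Finset.sum_singleton]
  have h1 : ∀ x : ℝ, ((derivative^[1] P).eval x)^2
      = (ux - 3/20*ux3)^2 + (4*(ux - 3/20*ux3)*(ux2 - 3/14*ux4))*x
        + (4*(ux2-3/14*ux4)^2 + 6*(ux-3/20*ux3)*ux3)*x^2
        + (12*(ux2-3/14*ux4)*ux3 + 8*(ux-3/20*ux3)*ux4)*x^3
        + (9*ux3^2+16*(ux2-3/14*ux4)*ux4)*x^4 + (24*ux3*ux4)*x^5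
        + (16*ux4^2)*x^6 + 0*x^7 + 0*x^8 := by
    intro x; rw [hP]; unfold L1 L2 L3 L4; simp; ring
  have h2 : ∀ x : ℝ, ((derivative^[2] P).eval x)^2
      = 4*(ux2-3/14*ux4)^2 + (24*(ux2-3/14*ux4)*ux3)*x
        + (36*ux3^2+48*(ux2-3/14*ux4)*ux4)*x^2 + (144*ux3*ux4)*x^3
        + (144*ux4^2)*x^4 + 0*x^5 + 0*x^6 + 0*x^7 + 0*x^8 := by
    intro x; rw [hP]; unfold L1 L2 L3 L4; simp; ring
  have h3 : ∀ x : ℝ, ((derivative^[3] P).eval x)^2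
      = 36*ux3^2 + (288*ux3*ux4)*x + (576*ux4^2)*x^2 + 0*x^3
        + 0*x^4 + 0*x^5 + 0*x^6 + 0*x^7 + 0*x^8 := by
    intro x; rw [hP]; unfold L1 L2 L3 L4; simp; ring
  have h4 : ∀ x : ℝ, ((derivative^[4] P).eval x)^2
      = 576*ux4^2 + 0*x + 0*x^2 + 0*x^3
        + 0*x^4 + 0*x^5 + 0*x^6 + 0*x^7 + 0*x^8 := by
    intro x; rw [hP]; unfold L1 L2 L3 L4; simp; ring
  simp_rw [h1, h2, h3, h4, int_poly8]
  norm_num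
  ring
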